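/- Let G be an n×d real matrix. For each column j, let s_j = ||G[:,j]||². Form C_k(G) by keeping a set of k columns sampled with probabilities proportional to s_j (zeroing the remaining columns). Then E||C_k(G) - G||_F² ≤ (1 - k/d)||G||_F², i.e., the block coordinate selection is a contraction with factor ξ ≥ k/d. -/

import Mathlib

open Finset

/-- Block coordinate selection (Algorithm 2): sampling a `k`-subset of columns with
probabilities monotone in the column norms `s_j = ‖G[:,j]‖²` yields a contraction:
`E‖C_k(G) - G‖_F² ≤ (1 - k/d)‖G‖_F²`. -/
theorem block_coordinate_selection_contraction
    {n d k : ℕ} (hd : 0 < d) (hk : k ≤ d)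
    (G : Matrix (Fin n) (Fin d) ℝ)
    (p : Finset (Fin d) → ℝ)
    (hp0 : ∀ ω, 0 ≤ p ω) (hp1 : ∑ ω : Finset (Fin d), p ω = 1)
    (hcard : ∀ ω, p ω ≠ 0 → ω.card = k)
    (hmono : ∀ j j' : Fin d,
      (∑ i, (G i j) ^ 2) ≤ (∑ i, (G i j') ^ 2) →
      (∑ ω ∈ Finset.univ.filter (fun ω : Finset (Fin d) => j ∈ ω), p ω) ≤
        (∑ ω ∈ Finset.univ.filter (fun ω : Finset (Fin d) => j' ∈ ω), p ω)) :
    ∑ ω : Finset (Fin d), p ω *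
        (∑ i, ∑ j, ((if j ∈ ω then G i j else 0) - G i j) ^ 2) ≤
      (1 - (k : ℝ) / d) * ∑ i, ∑ j, (G i j) ^ 2 := by
  set s : Fin d → ℝ := fun j => ∑ i, (G i j) ^ 2 with hs
  set q : Fin d → ℝ := fun j =>
    ∑ ω ∈ Finset.univ.filter (fun ω : Finset (Fin d) => j ∈ ω), p ω with hq
  have hs0 : ∀ j, 0 ≤ s j := fun j => Finset.sum_nonneg fun i _ => sq_nonneg _
  -- rewrite LHS as ∑ j, s j * (1 - q j)
  have hLHS : (∑ ω : Finset (Fin d), p ω *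
      (∑ i, ∑ j, ((if j ∈ ω then G i j else 0) - G i j) ^ 2)) =
      ∑ j, s j * (1 - q j) := by
    have h1 : ∀ ω : Finset (Fin d), (∑ i, ∑ j, ((if j ∈ ω then G i j else 0) - G i j) ^ 2)
        = ∑ j, (if j ∈ ω then 0 else s j) := by
      intro ω
      rw [Finset.sum_comm]
      refine Finset.sum_congr rfl fun j _ => ?_
      split_ifs with h
      · simp
      · simp [hs]
    simp_rw [h1, Finset.mul_sum]
    rw [Finset.sum_comm]
    refine Finset.sum_congr rfl fun j _ => ?_
    have h2 : ∀ ω : Finset (Fin d), p ω * (if j ∈ ω then 0 else s j)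
        = p ω * s j - (if j ∈ ω then p ω * s j else 0) := by
      intro ω; split_ifs <;> ring
    rw [Finset.sum_congr rfl fun ω _ => h2 ω, Finset.sum_sub_distrib,
      ← Finset.sum_mul, hp1, ← Finset.sum_filter, ← Finset.sum_mul, hq]
    ring
  -- ∑ q = k
  have hsumq : ∑ j, q j = (k : ℝ) := by
    simp_rw [hq, Finset.sum_filter]
    rw [Finset.sum_comm]
    have : ∀ ω : Finset (Fin d), (∑ j, if j ∈ ω then p ω else 0) = p ω * k := by
      intro ω
      rw [Finset.sum_ite_mem, Finset.univ_inter, Finset.sum_const, nsmul_eq_mul]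
      by_cases h : p ω = 0
      · simp [h]
      · rw [hcard ω h]; ring
    rw [Finset.sum_congr rfl fun ω _ => this ω, ← Finset.sum_mul, hp1, one_mul]
  -- Chebyshev
  have hmv : Monovary s q := by
    intro i j hij
    by_contra h
    exact absurd (hmono j i (le_of_not_ge h)) (not_le.mpr hij)
  have hcheb := hmv.sum_mul_sum_le_card_mul_sum
  rw [hsumq, Fintype.card_fin] at hcheb
  -- RHS
  have hRHS : (∑ i, ∑ j, (G i j) ^ 2) = ∑ j, s j := by
    rw [Finset.sum_comm]
  rw [hLHS, hRHS]
  have hd' : (0 : ℝ) < d := by exact_mod_cast hd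
  rw [sub_mul, one_mul]
  simp_rw [mul_sub, mul_one, Finset.sum_sub_distrib]
  gcongr ?_ - ?_
  · rw [div_mul_eq_mul_div, div_le_iff₀ hd', mul_comm (∑ j, s j * q j) _]
    calc (k : ℝ) * ∑ j, s j = (∑ j, s j) * (k : ℝ) := by ring
    _ ≤ d * ∑ j, s j * q j := hcheb
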